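/- For the spherical caps $\omega_r = \{y \in \partial B_1 \subset \mathbb{R}^N : y_1 > -r/2\}$, there exist $\bar r = \bar r(N) > 0$ and $C = C(N) > 0$ such that for all $r \in (0, \bar r)$ the first Dirichlet eigenvalue of the Laplace–Beltrami operator satisfies $N-1 - Cr \leq \lambda_1(\omega_r) \leq N-1$. In particular $\lambda_1(\omega_r) \leq \lambda_1(\omega_0) = N-1$ by domain monotonicity. -/

import Mathlib

open MeasureTheory Metric Real Set Filter Topology intervalIntegral

noncomputable section

/-- First Dirichlet eigenvalue of the Laplace–Beltrami operator on the spherical cap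
`ω_r = {y ∈ ∂B_1 : y₁ > -r/2}`, written in polar-angle (Rayleigh quotient) form with
`θ_r = arccos(-r/2)`. -/
noncomputable def capEig (N : ℕ) (r : ℝ) : ℝ :=
  sInf {q : ℝ | ∃ w : ℝ → ℝ,
    ContDiffOn ℝ 1 w (Set.Icc 0 (Real.arccos (-r / 2))) ∧
    w (Real.arccos (-r / 2)) = 0 ∧
    (0 < ∫ θ in (0:ℝ)..Real.arccos (-r / 2), Real.sin θ ^ (N - 2) * (w θ) ^ 2) ∧
    q = (∫ θ in (0:ℝ)..Real.arccos (-r / 2), Real.sin θ ^ (N - 2) * (deriv w θ) ^ 2) /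
        (∫ θ in (0:ℝ)..Real.arccos (-r / 2), Real.sin θ ^ (N - 2) * (w θ) ^ 2)}


lemma sin_mul_ge {t a : ℝ} (ht0 : 0 ≤ t) (ht1 : t ≤ 1) (ha0 : 0 ≤ a) (ha : a ≤ π) :
    t * Real.sin a ≤ Real.sin (t * a) := by
  have h := strictConcaveOn_sin_Icc.concaveOn.2 ⟨ha0, ha⟩
    (⟨le_rfl, Real.pi_pos.le⟩ : (0:ℝ) ∈ Set.Icc 0 π) ht0 (sub_nonneg.2 ht1)
    (add_sub_cancel t 1)
  simpa using h

private def Hgs (k : ℕ) (w g : ℝ → ℝ) (θ : ℝ) : ℝ :=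
  Real.sin θ ^ k * g θ ^ 2 - ((k : ℝ) + 1) * (Real.sin θ ^ k * w θ ^ 2)

private def Fgs (k : ℕ) (w : ℝ → ℝ) (θ : ℝ) : ℝ :=
  -(Real.sin θ ^ (k + 1) * w θ ^ 2) / Real.cos θ

private def Phi (k : ℕ) (w g : ℝ → ℝ) (θ : ℝ) : ℝ :=
  -(((k : ℝ) + 1) * Real.sin θ ^ k * w θ ^ 2) -
    Real.sin θ ^ (k + 1) * (2 * w θ * g θ * Real.cos θ + w θ ^ 2 * Real.sin θ) / Real.cos θ ^ 2

lemma hemi (k : ℕ) {w g : ℝ → ℝ} (hw : ContinuousOn w (Set.Icc 0 (π / 2)))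
    (hg : ContinuousOn g (Set.Icc 0 (π / 2)))
    (hd : ∀ θ ∈ Set.Ioo (0 : ℝ) (π / 2), HasDerivAt w (g θ) θ)
    (h0 : w (π / 2) = 0) :
    ((k : ℝ) + 1) * ∫ θ in (0 : ℝ)..(π / 2), Real.sin θ ^ k * (w θ) ^ 2
      ≤ ∫ θ in (0 : ℝ)..(π / 2), Real.sin θ ^ k * (g θ) ^ 2 := by
  have hπ : (0 : ℝ) < π / 2 := pi_div_two_pos
  have hsinc : ContinuousOn Real.sin (Set.Icc (0:ℝ) (π/2)) := Real.continuous_sin.continuousOn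
  have hcosc : ContinuousOn Real.cos (Set.Icc (0:ℝ) (π/2)) := Real.continuous_cos.continuousOn
  -- continuity of H
  have hHc : ContinuousOn (Hgs k w g) (Set.Icc 0 (π / 2)) := by
    unfold Hgs
    exact ((hsinc.pow k).mul (hg.pow 2)).sub
      (continuousOn_const.mul ((hsinc.pow k).mul (hw.pow 2)))
  have hHi : IntervalIntegrable (Hgs k w g) volume 0 (π / 2) := by
    apply ContinuousOn.intervalIntegrable
    rwa [Set.uIcc_of_le hπ.le]
  -- bounds
  obtain ⟨Mg, hMg⟩ := isCompact_Icc.exists_bound_of_continuousOn hg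
  obtain ⟨MH, hMH⟩ := isCompact_Icc.exists_bound_of_continuousOn hHc
  have hMg0 : 0 ≤ Mg := le_trans (norm_nonneg _) (hMg 0 ⟨le_rfl, hπ.le⟩)
  have hMH0 : 0 ≤ MH := le_trans (norm_nonneg _) (hMH 0 ⟨le_rfl, hπ.le⟩)
  -- derivative of F
  have hder : ∀ θ ∈ Set.Ioo (0:ℝ) (π/2), HasDerivAt (Fgs k w) (Phi k w g θ) θ := by
    intro θ hθ
    have hcos : Real.cos θ ≠ 0 :=
      (Real.cos_pos_of_mem_Ioo ⟨by linarith [hθ.1], hθ.2⟩).ne'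
    have h1 : HasDerivAt (fun x => Real.sin x ^ (k + 1))
        (((k : ℝ) + 1) * Real.sin θ ^ k * Real.cos θ) θ := by
      simpa using (Real.hasDerivAt_sin θ).fun_pow (k + 1)
    have h2 : HasDerivAt (fun x => w x ^ 2) (2 * w θ * g θ) θ := by
      simpa using (hd θ hθ).fun_pow 2
    have h3 := ((h1.fun_mul h2).fun_neg.fun_div (Real.hasDerivAt_cos θ) hcos)
    refine h3.congr_deriv ?_
    unfold Phi
    field_simp
    ring
  -- key estimate
  have key : ∀ b ∈ Set.Ioo (0:ℝ) (π/2),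
      -((π/2) * Mg^2 + MH) * (π/2 - b) ≤ ∫ θ in (0:ℝ)..(π/2), Hgs k w g θ := by
    intro b hb
    have hsub : Set.Icc (0:ℝ) b ⊆ Set.Icc 0 (π/2) := Set.Icc_subset_Icc le_rfl hb.2.le
    have hcospos : ∀ θ ∈ Set.Icc (0:ℝ) b, 0 < Real.cos θ := by
      intro θ hθ
      exact Real.cos_pos_of_mem_Ioo ⟨by linarith [hθ.1], lt_of_le_of_lt hθ.2 hb.2⟩
    have hFcont : ContinuousOn (Fgs k w) (Set.Icc 0 b) := by
      unfold Fgs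
      exact (((hsinc.mono hsub).pow (k+1)).mul ((hw.mono hsub).pow 2)).neg.div
        (hcosc.mono hsub) (fun θ hθ => (hcospos θ hθ).ne')
    have hΦcont : ContinuousOn (Phi k w g) (Set.Icc 0 b) := by
      unfold Phi
      refine ContinuousOn.sub ?_ ?_
      · exact ((continuousOn_const.mul ((hsinc.mono hsub).pow k)).mul
          ((hw.mono hsub).pow 2)).neg
      · exact (((hsinc.mono hsub).pow (k+1)).mul
          ((((continuousOn_const.mul (hw.mono hsub)).mul (hg.mono hsub)).mul
            (hcosc.mono hsub)).add (((hw.mono hsub).pow 2).mul (hsinc.mono hsub)))).div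
          ((hcosc.mono hsub).pow 2) (fun θ hθ => pow_ne_zero _ (hcospos θ hθ).ne')
    have hΦint : IntervalIntegrable (Phi k w g) volume 0 b := by
      apply ContinuousOn.intervalIntegrable
      rwa [Set.uIcc_of_le hb.1.le]
    have hHint_b : IntervalIntegrable (Hgs k w g) volume 0 b := by
      apply ContinuousOn.intervalIntegrable
      rw [Set.uIcc_of_le hb.1.le]
      exact hHc.mono hsub
    have hHint_b2 : IntervalIntegrable (Hgs k w g) volume b (π/2) := by
      apply ContinuousOn.intervalIntegrable
      rw [Set.uIcc_of_le hb.2.le]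
      exact hHc.mono (Set.Icc_subset_Icc hb.1.le le_rfl)
    -- FTC on [0,b]
    have hFTC : ∫ θ in (0:ℝ)..b, Phi k w g θ = Fgs k w b - Fgs k w 0 :=
      intervalIntegral.integral_eq_sub_of_hasDeriv_right_of_le hb.1.le hFcont
        (fun x hx => (hder x ⟨hx.1, hx.2.trans hb.2⟩).hasDerivWithinAt) hΦint
    have hF0 : Fgs k w 0 = 0 := by
      unfold Fgs
      simp
    -- pointwise nonnegativity of H - Phi on [0,b]
    have hpt : ∀ θ ∈ Set.Icc (0:ℝ) b, 0 ≤ Hgs k w g θ - Phi k w g θ := by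
      intro θ hθ
      have hc := hcospos θ hθ
      have hs : 0 ≤ Real.sin θ :=
        Real.sin_nonneg_of_nonneg_of_le_pi hθ.1 (by linarith [hθ.2, hb.2, Real.pi_pos])
      have heq : Hgs k w g θ - Phi k w g θ =
          Real.sin θ ^ k * (g θ * Real.cos θ + w θ * Real.sin θ) ^ 2 / Real.cos θ ^ 2 := by
        unfold Hgs Phi
        field_simp
        ring
      rw [heq]
      positivity
    have hIb : Fgs k w b ≤ ∫ θ in (0:ℝ)..b, Hgs k w g θ := by
      have h1 : 0 ≤ ∫ θ in (0:ℝ)..b, (Hgs k w g θ - Phi k w g θ) :=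
        intervalIntegral.integral_nonneg hb.1.le hpt
      rw [intervalIntegral.integral_sub hHint_b hΦint] at h1
      rw [hFTC, hF0] at *
      linarith
    -- tail bound
    have hsplit : (∫ θ in (0:ℝ)..(π/2), Hgs k w g θ)
        = (∫ θ in (0:ℝ)..b, Hgs k w g θ) + ∫ θ in b..(π/2), Hgs k w g θ :=
      (intervalIntegral.integral_add_adjacent_intervals hHint_b hHint_b2).symm
    have htail : |∫ θ in b..(π/2), Hgs k w g θ| ≤ MH * (π/2 - b) := by
      have h1 : ∀ x ∈ Set.uIoc b (π/2), ‖Hgs k w g x‖ ≤ MH := by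
        intro x hx
        rw [Set.uIoc_of_le hb.2.le] at hx
        exact hMH x ⟨le_trans hb.1.le hx.1.le, hx.2⟩
      have h2 := intervalIntegral.norm_integral_le_of_norm_le_const h1
      rwa [abs_of_nonneg (by linarith [hb.2] : (0:ℝ) ≤ π/2 - b)] at h2
    -- bound on w b
    have hwB : |w b| ≤ Mg * (π/2 - b) := by
      have hgint : IntervalIntegrable g volume b (π/2) := by
        apply ContinuousOn.intervalIntegrable
        rw [Set.uIcc_of_le hb.2.le]
        exact hg.mono (Set.Icc_subset_Icc hb.1.le le_rfl)
      have hFTCw : ∫ θ in b..(π/2), g θ = w (π/2) - w b :=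
        intervalIntegral.integral_eq_sub_of_hasDeriv_right_of_le hb.2.le
          (hw.mono (Set.Icc_subset_Icc hb.1.le le_rfl))
          (fun x hx => (hd x ⟨lt_trans hb.1 hx.1, hx.2⟩).hasDerivWithinAt) hgint
      have h1 : ∀ x ∈ Set.uIoc b (π/2), ‖g x‖ ≤ Mg := by
        intro x hx
        rw [Set.uIoc_of_le hb.2.le] at hx
        exact hMg x ⟨le_trans hb.1.le hx.1.le, hx.2⟩
      have h2 := intervalIntegral.norm_integral_le_of_norm_le_const h1
      rw [hFTCw, h0, abs_of_nonneg (by linarith [hb.2] : (0:ℝ) ≤ π/2 - b)] at h2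
      calc |w b| = ‖(0:ℝ) - w b‖ := by rw [zero_sub, norm_neg]; rfl
        _ ≤ Mg * (π/2 - b) := h2
    -- bound on F b
    have hcosb : (2/π) * (π/2 - b) ≤ Real.cos b := by
      have h1 := Real.one_sub_mul_le_cos hb.1.le hb.2.le
      have hπ0 : π ≠ 0 := Real.pi_ne_zero
      have : (2/π) * (π/2 - b) = 1 - 2/π * b := by field_simp
      linarith [this ▸ h1]
    have hcosbpos : 0 < Real.cos b := hcospos b ⟨hb.1.le, le_rfl⟩
    have hsinb : 0 ≤ Real.sin b :=
      Real.sin_nonneg_of_nonneg_of_le_pi hb.1.le (by linarith [hb.2, Real.pi_pos])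
    have hFb : -((π/2) * Mg^2 * (π/2 - b)) ≤ Fgs k w b := by
      have hs1 : Real.sin b ^ (k+1) ≤ 1 := pow_le_one₀ hsinb (Real.sin_le_one b)
      have hw2 : w b ^ 2 ≤ (Mg * (π/2 - b))^2 := by
        rw [← sq_abs (w b)]
        exact pow_le_pow_left₀ (abs_nonneg _) hwB 2
      have h1 : Real.sin b ^ (k+1) * w b ^ 2 ≤ Mg^2 * (π/2 - b)^2 := by
        calc Real.sin b ^ (k+1) * w b ^ 2 ≤ 1 * (Mg * (π/2 - b))^2 :=
              mul_le_mul hs1 hw2 (sq_nonneg _) zero_le_one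
          _ = Mg^2 * (π/2 - b)^2 := by ring
      have h2 : (π/2) * Mg^2 * (π/2 - b) * ((2/π) * (π/2 - b)) = Mg^2 * (π/2 - b)^2 := by
        field_simp
      have h3 : 0 ≤ (π/2) * Mg^2 * (π/2 - b) := by
        have : (0:ℝ) ≤ π/2 - b := by linarith [hb.2]
        positivity
      have h4 := mul_le_mul_of_nonneg_left hcosb h3
      have h5 : Real.sin b ^ (k+1) * w b ^ 2 ≤ (π/2) * Mg^2 * (π/2 - b) * Real.cos b := by
        linarith [h2 ▸ h4]
      unfold Fgs
      rw [neg_div, neg_le_neg_iff, div_le_iff₀ hcosbpos]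
      exact h5
    -- combine
    have htail' : -(MH * (π/2 - b)) ≤ ∫ θ in b..(π/2), Hgs k w g θ :=
      neg_le_of_abs_le htail
    rw [hsplit]
    have := hIb
    nlinarith [hFb, htail', this]
  -- conclude nonnegativity of the integral of H
  have hX : 0 ≤ ∫ θ in (0:ℝ)..(π/2), Hgs k w g θ := by
    by_contra hneg
    push_neg at hneg
    set X := ∫ θ in (0:ℝ)..(π/2), Hgs k w g θ with hXdef
    set K : ℝ := (π/2) * Mg^2 + MH with hKdef
    have hK0 : 0 ≤ K := by positivity
    have hK1 : (0:ℝ) < K + 1 := by linarith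
    set ε : ℝ := min (π/4) (-X/(2*(K+1))) with hεdef
    have hε1 : 0 < ε := by
      apply lt_min
      · positivity
      · apply div_pos (by linarith) (by linarith)
    have hε4 : ε ≤ π/4 := min_le_left _ _
    have hbmem : π/2 - ε ∈ Set.Ioo (0:ℝ) (π/2) := by
      constructor
      · have : π/4 < π/2 := by linarith [Real.pi_pos]
        linarith
      · linarith
    have hk := key (π/2 - ε) hbmem
    have hrw : π/2 - (π/2 - ε) = ε := by ring
    rw [hrw] at hk
    have hε2 : ε ≤ -X/(2*(K+1)) := min_le_right _ _
    have h3 : (K+1) * ε ≤ -X/2 := by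
      have h4 := mul_le_mul_of_nonneg_left hε2 hK1.le
      calc (K+1) * ε ≤ (K+1) * (-X/(2*(K+1))) := h4
        _ = -X/2 := by field_simp
    clear_value X K ε
    linarith [hk, h3, hε1, hneg]
  -- convert to the statement
  have hint1 : IntervalIntegrable (fun θ => Real.sin θ ^ k * g θ ^ 2) volume 0 (π/2) := by
    apply ContinuousOn.intervalIntegrable
    rw [Set.uIcc_of_le hπ.le]
    exact (hsinc.pow k).mul (hg.pow 2)
  have hint2 : IntervalIntegrable (fun θ => ((k:ℝ)+1) * (Real.sin θ ^ k * w θ ^ 2)) volume 0 (π/2) := by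
    apply ContinuousOn.intervalIntegrable
    rw [Set.uIcc_of_le hπ.le]
    exact continuousOn_const.mul ((hsinc.pow k).mul (hw.pow 2))
  have hsplit2 : (∫ θ in (0:ℝ)..(π/2), Hgs k w g θ)
      = (∫ θ in (0:ℝ)..(π/2), Real.sin θ ^ k * g θ ^ 2)
        - ((k:ℝ)+1) * ∫ θ in (0:ℝ)..(π/2), Real.sin θ ^ k * w θ ^ 2 := by
    unfold Hgs
    rw [intervalIntegral.integral_sub hint1 hint2, intervalIntegral.integral_const_mul]
  rw [hsplit2] at hX
  linarith

lemma capT_facts {r : ℝ} (hr0 : 0 < r) (hr1 : r ≤ 1/2) :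
    π/2 < Real.arccos (-r/2) ∧ Real.arccos (-r/2) ≤ π/2 + π/4 * r ∧ π/4 * r ≤ r := by
  have hrr : (-1:ℝ) ≤ r/2 := by linarith
  have hrr2 : r/2 ≤ 1 := by linarith
  have hT : Real.arccos (-r/2) = π/2 + Real.arcsin (r/2) := by
    rw [show (-r/2 : ℝ) = -(r/2) by ring, Real.arccos_eq_pi_div_two_sub_arcsin,
      Real.arcsin_neg]
    ring
  have harc0 : 0 < Real.arcsin (r/2) := Real.arcsin_pos.2 (by linarith)
  have harcle : Real.arcsin (r/2) ≤ π/4 * r := by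
    have h1 : Real.arcsin (r/2) ≤ π/2 := Real.arcsin_le_pi_div_two _
    have h2 : 0 ≤ Real.arcsin (r/2) := harc0.le
    have h3 := Real.mul_le_sin h2 h1
    rw [Real.sin_arcsin (by linarith) (by linarith)] at h3
    have hπ := Real.pi_pos
    calc Real.arcsin (r/2) = (π/2) * (2/π * Real.arcsin (r/2)) := by
          field_simp
      _ ≤ (π/2) * (r/2) := by
          apply mul_le_mul_of_nonneg_left h3 (by positivity)
      _ = π/4 * r := by ring
  refine ⟨by rw [hT]; linarith, by rw [hT]; linarith, ?_⟩
  nlinarith [Real.pi_le_four, hr0]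

lemma capLower (k : ℕ) {r : ℝ} (hr0 : 0 < r) (hr1 : r ≤ 1/2) {w g : ℝ → ℝ}
    (hw : ContinuousOn w (Set.Icc 0 (Real.arccos (-r/2))))
    (hg : ContinuousOn g (Set.Icc 0 (Real.arccos (-r/2))))
    (hd : ∀ θ ∈ Set.Ioo (0:ℝ) (Real.arccos (-r/2)), HasDerivAt w (g θ) θ)
    (h0 : w (Real.arccos (-r/2)) = 0) :
    (((k:ℝ)+1) - 2*((k:ℝ)+1)^2 * r) *
        ∫ θ in (0:ℝ)..Real.arccos (-r/2), Real.sin θ ^ k * w θ ^ 2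
      ≤ ∫ θ in (0:ℝ)..Real.arccos (-r/2), Real.sin θ ^ k * g θ ^ 2 := by
  obtain ⟨hT2, hTle, hπ4⟩ := capT_facts hr0 hr1
  set T := Real.arccos (-r/2) with hTdef
  have hπ : (0:ℝ) < π/2 := pi_div_two_pos
  have hT0 : 0 < T := lt_trans hπ hT2
  have hTpi : T ≤ π := Real.arccos_le_pi _
  set c : ℝ := T / (π/2) with hcdef
  have hc0 : 0 < c := div_pos hT0 hπ
  have hcT : c * (π/2) = T := div_mul_cancel₀ _ hπ.ne'
  have hc1 : 1 < c := by
    rw [hcdef, lt_div_iff₀ hπ]; linarith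
  have hcr : c ≤ 1 + r/2 := by
    rw [hcdef, div_le_iff₀ hπ]
    have : (1 + r/2) * (π/2) = π/2 + π/4 * r := by ring
    linarith [this ▸ hTle]
  have hcr' : c ≤ 1 + r := by linarith
  -- maps
  have hmaps : ∀ s ∈ Set.Icc (0:ℝ) (π/2), c * s ∈ Set.Icc (0:ℝ) T := by
    intro s hs
    constructor
    · exact mul_nonneg hc0.le hs.1
    · calc c * s ≤ c * (π/2) := mul_le_mul_of_nonneg_left hs.2 hc0.le
        _ = T := hcT
  have hWc : ContinuousOn (fun s => w (c * s)) (Set.Icc 0 (π/2)) :=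
    hw.comp (continuous_const.mul continuous_id).continuousOn hmaps
  have hGc : ContinuousOn (fun s => c * g (c * s)) (Set.Icc 0 (π/2)) :=
    continuousOn_const.mul (hg.comp (continuous_const.mul continuous_id).continuousOn hmaps)
  have hdW : ∀ s ∈ Set.Ioo (0:ℝ) (π/2), HasDerivAt (fun s => w (c * s)) (c * g (c * s)) s := by
    intro s hs
    have hmem : c * s ∈ Set.Ioo (0:ℝ) T :=
      ⟨mul_pos hc0 hs.1, hcT ▸ mul_lt_mul_of_pos_left hs.2 hc0⟩
    have h1 : HasDerivAt (fun s : ℝ => c * s) c s := by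
      simpa using (hasDerivAt_id s).const_mul c
    have h2 := (hd (c * s) hmem).comp s h1
    refine h2.congr_deriv ?_
    ring
  have hW0 : (fun s => w (c * s)) (π/2) = 0 := by
    simp only
    rw [hcT]
    exact h0
  have hHemi := hemi k hWc hGc hdW hW0
  -- pointwise sine comparison
  have hss : ∀ s ∈ Set.Icc (0:ℝ) (π/2), 0 ≤ Real.sin s := fun s hs =>
    Real.sin_nonneg_of_nonneg_of_le_pi hs.1 (hs.2.trans (by linarith [Real.pi_pos]))
  have hcs0 : ∀ s ∈ Set.Icc (0:ℝ) (π/2), 0 ≤ Real.sin (c*s) := by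
    intro s hs
    have h := hmaps s hs
    exact Real.sin_nonneg_of_nonneg_of_le_pi h.1 (h.2.trans hTpi)
  have hsin_lb : ∀ s ∈ Set.Icc (0:ℝ) (π/2), (1-r) * Real.sin s ≤ Real.sin (c*s) := by
    intro s hs
    have he : c*s = s + (c-1)*s := by ring
    have he0 : 0 ≤ (c-1)*s := mul_nonneg (by linarith) hs.1
    have heR : (c-1)*s ≤ r := by
      calc (c-1)*s ≤ (r/2)*(π/2) :=
            mul_le_mul (by linarith) hs.2 hs.1 (by linarith)
        _ = π/4*r := by ring
        _ ≤ r := hπ4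
    have hcose : 1 - r ≤ Real.cos ((c-1)*s) := by
      have h1 := Real.one_sub_sq_div_two_le_cos (x := (c-1)*s)
      nlinarith [heR, he0, hr0, hr1]
    have hs0 := hss s hs
    have hcs : 0 ≤ Real.cos s :=
      Real.cos_nonneg_of_mem_Icc ⟨by linarith [hs.1, Real.pi_pos], hs.2⟩
    have hse : 0 ≤ Real.sin ((c-1)*s) :=
      Real.sin_nonneg_of_nonneg_of_le_pi he0 (heR.trans (by linarith [Real.pi_gt_three]))
    rw [he, Real.sin_add]
    nlinarith [mul_le_mul_of_nonneg_left hcose hs0, mul_nonneg hcs hse]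
  have hsin_ub : ∀ s ∈ Set.Icc (0:ℝ) (π/2), Real.sin (c*s) ≤ (1+r) * Real.sin s := by
    intro s hs
    have hmem := hmaps s hs
    have h := sin_mul_ge (t := 1/c) (a := c*s) (by positivity)
      ((div_le_one hc0).2 (by linarith)) hmem.1 (hmem.2.trans hTpi)
    have hsimp : (1/c)*(c*s) = s := by field_simp
    rw [hsimp] at h
    have h2 : Real.sin (c*s) ≤ c * Real.sin s := by
      calc Real.sin (c*s) = c * ((1/c) * Real.sin (c*s)) := by field_simp
        _ ≤ c * Real.sin s := mul_le_mul_of_nonneg_left h hc0.le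
    exact h2.trans (mul_le_mul_of_nonneg_right (by linarith) (hss s hs))
  -- substitution
  have hsubI : ∀ f : ℝ → ℝ, (∫ θ in (0:ℝ)..T, f θ) = c * ∫ s in (0:ℝ)..(π/2), f (c*s) := by
    intro f
    have h := intervalIntegral.smul_integral_comp_mul_left (a := 0) (b := π/2) (f := f) c
    rw [mul_zero, hcT, smul_eq_mul] at h
    exact h.symm
  have hDen : (∫ θ in (0:ℝ)..T, Real.sin θ^k * w θ^2)
      = c * ∫ s in (0:ℝ)..(π/2), Real.sin (c*s)^k * (w (c*s))^2 :=
    hsubI (fun θ => Real.sin θ^k * w θ^2)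
  have hNum : (∫ θ in (0:ℝ)..T, Real.sin θ^k * g θ^2)
      = c * ∫ s in (0:ℝ)..(π/2), Real.sin (c*s)^k * (g (c*s))^2 :=
    hsubI (fun θ => Real.sin θ^k * g θ^2)
  -- integrability of the four rescaled integrands
  have hsinck : ContinuousOn (fun s => Real.sin (c*s)) (Set.Icc (0:ℝ) (π/2)) :=
    (Real.continuous_sin.comp (continuous_const.mul continuous_id)).continuousOn
  have hwc2 : ContinuousOn (fun s => w (c*s)) (Set.Icc (0:ℝ) (π/2)) := hWc
  have hgc2 : ContinuousOn (fun s => g (c*s)) (Set.Icc (0:ℝ) (π/2)) :=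
    hg.comp (continuous_const.mul continuous_id).continuousOn hmaps
  have mkint : ∀ {f : ℝ → ℝ}, ContinuousOn f (Set.Icc (0:ℝ) (π/2)) →
      IntervalIntegrable f volume 0 (π/2) := by
    intro f hf
    apply ContinuousOn.intervalIntegrable
    rwa [Set.uIcc_of_le pi_div_two_pos.le]
  have h1r : (0:ℝ) ≤ 1 - r := by linarith
  have h1r' : (0:ℝ) ≤ 1 + r := by linarith
  -- rewrite hemi RHS
  have hG2 : (∫ s in (0:ℝ)..(π/2), Real.sin s^k * (c * g (c*s))^2)
      = c^2 * ∫ s in (0:ℝ)..(π/2), Real.sin s^k * (g (c*s))^2 := by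
    rw [← intervalIntegral.integral_const_mul]
    apply intervalIntegral.integral_congr
    intro s hs
    simp only
    ring
  rw [hG2] at hHemi
  -- monotone comparisons
  have hI1 : (∫ s in (0:ℝ)..(π/2), Real.sin (c*s)^k * (w (c*s))^2)
      ≤ (1+r)^k * ∫ s in (0:ℝ)..(π/2), Real.sin s^k * (w (c*s))^2 := by
    rw [← intervalIntegral.integral_const_mul]
    apply intervalIntegral.integral_mono_on pi_div_two_pos.le
      (mkint ((hsinck.pow k).mul (hwc2.pow 2)))
      (mkint (continuousOn_const.mul ((Real.continuous_sin.continuousOn.pow k).mul (hwc2.pow 2))))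
    intro s hs
    have hpk : Real.sin (c*s)^k ≤ ((1+r) * Real.sin s)^k :=
      pow_le_pow_left₀ (hcs0 s hs) (hsin_ub s hs) k
    calc Real.sin (c*s)^k * (w (c*s))^2 ≤ ((1+r) * Real.sin s)^k * (w (c*s))^2 :=
          mul_le_mul_of_nonneg_right hpk (sq_nonneg _)
      _ = (1+r)^k * (Real.sin s^k * (w (c*s))^2) := by rw [mul_pow]; ring
  have hI2 : (1-r)^k * (∫ s in (0:ℝ)..(π/2), Real.sin s^k * (g (c*s))^2)
      ≤ ∫ s in (0:ℝ)..(π/2), Real.sin (c*s)^k * (g (c*s))^2 := by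
    rw [← intervalIntegral.integral_const_mul]
    apply intervalIntegral.integral_mono_on pi_div_two_pos.le
      (mkint (continuousOn_const.mul ((Real.continuous_sin.continuousOn.pow k).mul (hgc2.pow 2))))
      (mkint ((hsinck.pow k).mul (hgc2.pow 2)))
    intro s hs
    have hpk : ((1-r) * Real.sin s)^k ≤ Real.sin (c*s)^k :=
      pow_le_pow_left₀ (mul_nonneg h1r (hss s hs)) (hsin_lb s hs) k
    calc (1-r)^k * (Real.sin s^k * (g (c*s))^2) = ((1-r) * Real.sin s)^k * (g (c*s))^2 := by
          rw [mul_pow]; ring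
      _ ≤ Real.sin (c*s)^k * (g (c*s))^2 := mul_le_mul_of_nonneg_right hpk (sq_nonneg _)
  -- nonnegativity
  have hJ3 : 0 ≤ ∫ s in (0:ℝ)..(π/2), Real.sin s^k * (w (c*s))^2 := by
    apply intervalIntegral.integral_nonneg pi_div_two_pos.le
    intro s hs
    exact mul_nonneg (pow_nonneg (hss s hs) k) (sq_nonneg _)
  have hDen0 : 0 ≤ ∫ θ in (0:ℝ)..T, Real.sin θ^k * w θ^2 := by
    apply intervalIntegral.integral_nonneg hT0.le
    intro θ hθ
    exact mul_nonneg (pow_nonneg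
      (Real.sin_nonneg_of_nonneg_of_le_pi hθ.1 (hθ.2.trans hTpi)) k) (sq_nonneg _)
  have hNum0 : 0 ≤ ∫ θ in (0:ℝ)..T, Real.sin θ^k * g θ^2 := by
    apply intervalIntegral.integral_nonneg hT0.le
    intro θ hθ
    exact mul_nonneg (pow_nonneg
      (Real.sin_nonneg_of_nonneg_of_le_pi hθ.1 (hθ.2.trans hTpi)) k) (sq_nonneg _)
  rcases le_or_gt (((k:ℝ)+1) - 2*((k:ℝ)+1)^2 * r) 0 with hμ | hμ
  · exact le_trans (mul_nonpos_iff.mpr (Or.inr ⟨hμ, hDen0⟩)) hNum0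
  · -- the constant comparison
    have hμc : (((k:ℝ)+1) - 2*((k:ℝ)+1)^2 * r) * (c^2 * (1+r)^k) ≤ ((k:ℝ)+1) * (1-r)^k := by
      have hB := one_add_mul_le_pow (a := -r) (by linarith : (-2:ℝ) ≤ -r) (2*k+2)
      have hb1 : (((k:ℝ)+1) - 2*((k:ℝ)+1)^2 * r) ≤ ((k:ℝ)+1) * (1-r)^(2*k+2) := by
        have h2 := mul_le_mul_of_nonneg_left hB (show (0:ℝ) ≤ (k:ℝ)+1 by positivity)
        rw [show (1:ℝ) + -r = 1 - r by ring] at h2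
        push_cast at h2
        linarith only [h2]
      have hc2 : c^2 ≤ (1+r)^2 := pow_le_pow_left₀ hc0.le hcr' 2
      have hb2 : c^2 * (1+r)^k ≤ (1+r)^(k+2) := by
        calc c^2 * (1+r)^k ≤ (1+r)^2 * (1+r)^k :=
              mul_le_mul_of_nonneg_right hc2 (pow_nonneg h1r' k)
          _ = (1+r)^(k+2) := by rw [← pow_add]; ring_nf
      have hb3 : (1-r)^(2*k+2) * (1+r)^(k+2) ≤ (1-r)^k := by
        have e1 : (2*k+2) = k + (k+2) := by omega
        have e4 : ((1-r)*(1+r))^(k+2) ≤ 1 := pow_le_one₀ (by nlinarith only [hr0, hr1]) (by nlinarith only [hr0, hr1])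
        calc (1-r)^(2*k+2) * (1+r)^(k+2) = (1-r)^k * ((1-r)^(k+2) * (1+r)^(k+2)) := by
              rw [e1, pow_add]; ring
          _ = (1-r)^k * ((1-r)*(1+r))^(k+2) := by rw [mul_pow]
          _ ≤ (1-r)^k * 1 := mul_le_mul_of_nonneg_left e4 (pow_nonneg h1r k)
          _ = (1-r)^k := mul_one _
      calc (((k:ℝ)+1) - 2*((k:ℝ)+1)^2 * r) * (c^2 * (1+r)^k)
            ≤ (((k:ℝ)+1) - 2*((k:ℝ)+1)^2 * r) * (1+r)^(k+2) :=
            mul_le_mul_of_nonneg_left hb2 hμ.le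
        _ ≤ (((k:ℝ)+1) * (1-r)^(2*k+2)) * (1+r)^(k+2) :=
            mul_le_mul_of_nonneg_right hb1 (pow_nonneg h1r' _)
        _ = ((k:ℝ)+1) * ((1-r)^(2*k+2) * (1+r)^(k+2)) := by ring
        _ ≤ ((k:ℝ)+1) * (1-r)^k :=
            mul_le_mul_of_nonneg_left hb3 (by positivity)
    -- final chain
    have hmain : (((k:ℝ)+1) - 2*((k:ℝ)+1)^2 * r) * (∫ θ in (0:ℝ)..T, Real.sin θ^k * w θ^2) * c
        ≤ (∫ θ in (0:ℝ)..T, Real.sin θ^k * g θ^2) * c := by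
      calc (((k:ℝ)+1) - 2*((k:ℝ)+1)^2 * r) * (∫ θ in (0:ℝ)..T, Real.sin θ^k * w θ^2) * c
          = ((((k:ℝ)+1) - 2*((k:ℝ)+1)^2 * r) * c^2) * ∫ s in (0:ℝ)..(π/2), Real.sin (c*s)^k * (w (c*s))^2 := by
            rw [hDen]; ring
        _ ≤ ((((k:ℝ)+1) - 2*((k:ℝ)+1)^2 * r) * c^2) * ((1+r)^k * ∫ s in (0:ℝ)..(π/2), Real.sin s^k * (w (c*s))^2) :=
            mul_le_mul_of_nonneg_left hI1 (mul_nonneg hμ.le (sq_nonneg c))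
        _ = ((((k:ℝ)+1) - 2*((k:ℝ)+1)^2 * r) * (c^2 * (1+r)^k)) * ∫ s in (0:ℝ)..(π/2), Real.sin s^k * (w (c*s))^2 := by
            ring
        _ ≤ (((k:ℝ)+1) * (1-r)^k) * ∫ s in (0:ℝ)..(π/2), Real.sin s^k * (w (c*s))^2 :=
            mul_le_mul_of_nonneg_right hμc hJ3
        _ = (1-r)^k * (((k:ℝ)+1) * ∫ s in (0:ℝ)..(π/2), Real.sin s^k * (w (c*s))^2) := by
            ring
        _ ≤ (1-r)^k * (c^2 * ∫ s in (0:ℝ)..(π/2), Real.sin s^k * (g (c*s))^2) :=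
            mul_le_mul_of_nonneg_left hHemi (pow_nonneg h1r k)
        _ = c^2 * ((1-r)^k * ∫ s in (0:ℝ)..(π/2), Real.sin s^k * (g (c*s))^2) := by
            ring
        _ ≤ c^2 * ∫ s in (0:ℝ)..(π/2), Real.sin (c*s)^k * (g (c*s))^2 :=
            mul_le_mul_of_nonneg_left hI2 (sq_nonneg c)
        _ = (∫ θ in (0:ℝ)..T, Real.sin θ^k * g θ^2) * c := by
            rw [hNum]; ring
    exact le_of_mul_le_mul_right hmain hc0

lemma capDenPos (k : ℕ) {r : ℝ} (hr0 : 0 < r) (hr1 : r ≤ 1/2) :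
    0 < ∫ θ in (0:ℝ)..Real.arccos (-r/2), Real.sin θ^k * (Real.cos θ + r/2)^2 := by
  set T := Real.arccos (-r/2) with hT
  have hrr : (-1:ℝ) ≤ -r/2 := by linarith
  have hrr2 : (-r/2:ℝ) ≤ 1 := by linarith
  have hT0 : 0 < T := by
    apply Real.arccos_pos.2; linarith
  have hTpi : T ≤ π := Real.arccos_le_pi _
  have hcosT : Real.cos T = -r/2 := Real.cos_arccos hrr hrr2
  apply intervalIntegral.intervalIntegral_pos_of_pos_on
  · apply ContinuousOn.intervalIntegrable
    rw [Set.uIcc_of_le hT0.le]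
    exact (Real.continuous_sin.continuousOn.pow k).mul
      ((Real.continuous_cos.continuousOn.add continuousOn_const).pow 2)
  · intro θ hθ
    have h1 : 0 < Real.sin θ :=
      Real.sin_pos_of_pos_of_lt_pi hθ.1 (lt_of_lt_of_le hθ.2 hTpi)
    have h2 : Real.cos T < Real.cos θ := by
      apply Real.strictAntiOn_cos ⟨hθ.1.le, le_trans hθ.2.le hTpi⟩
        ⟨Real.arccos_nonneg _, hTpi⟩ hθ.2
    rw [hcosT] at h2
    have h3 : 0 < Real.cos θ + r/2 := by linarith
    positivity
  · exact hT0

lemma capUpper (k : ℕ) {r : ℝ} (hr0 : 0 < r) (hr1 : r ≤ 1/2) :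
    (∫ θ in (0:ℝ)..Real.arccos (-r/2), Real.sin θ^k * (Real.sin θ)^2)
      ≤ ((k:ℝ)+1) * ∫ θ in (0:ℝ)..Real.arccos (-r/2), Real.sin θ^k * (Real.cos θ + r/2)^2 := by
  set T := Real.arccos (-r/2) with hT
  have hrr : (-1:ℝ) ≤ -r/2 := by linarith
  have hrr2 : (-r/2:ℝ) ≤ 1 := by linarith
  have hT0 : 0 < T := by apply Real.arccos_pos.2; linarith
  have hTpi : T ≤ π := Real.arccos_le_pi _
  have hcosT : Real.cos T = -r/2 := Real.cos_arccos hrr hrr2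
  have hsT : 0 ≤ Real.sin T := Real.sin_nonneg_of_nonneg_of_le_pi hT0.le hTpi
  have c1 : Continuous fun θ : ℝ => Real.sin θ^k * Real.cos θ^2 :=
    (Real.continuous_sin.pow k).mul (Real.continuous_cos.pow 2)
  have c2 : Continuous fun θ : ℝ => Real.sin θ^k * Real.sin θ^2 :=
    (Real.continuous_sin.pow k).mul (Real.continuous_sin.pow 2)
  have c3 : Continuous fun θ : ℝ => Real.sin θ^k * Real.cos θ :=
    (Real.continuous_sin.pow k).mul Real.continuous_cos
  have c4 : Continuous fun θ : ℝ => Real.sin θ^k := Real.continuous_sin.pow k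
  -- FTC identities
  have hFTC1 : ∫ θ in (0:ℝ)..T,
      (((k:ℝ)+1) * (Real.sin θ^k * Real.cos θ^2) - Real.sin θ^k * Real.sin θ^2)
      = Real.sin T^(k+1) * Real.cos T := by
    have := intervalIntegral.integral_eq_sub_of_hasDerivAt
      (f := fun x => Real.sin x^(k+1) * Real.cos x)
      (f' := fun θ => ((k:ℝ)+1) * (Real.sin θ^k * Real.cos θ^2) - Real.sin θ^k * Real.sin θ^2)
      (a := 0) (b := T) ?_ ?_
    · rw [this]; simp
    · intro θ _
      have h1 : HasDerivAt (fun x => Real.sin x ^ (k+1))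
          (((k:ℝ)+1) * Real.sin θ^k * Real.cos θ) θ := by
        simpa using (Real.hasDerivAt_sin θ).fun_pow (k+1)
      have h2 := h1.mul (Real.hasDerivAt_cos θ)
      refine h2.congr_deriv ?_
      ring
    · exact ((continuous_const.mul c1).sub c2).intervalIntegrable _ _
  have hFTC2 : ∫ θ in (0:ℝ)..T, ((k:ℝ)+1) * (Real.sin θ^k * Real.cos θ)
      = Real.sin T^(k+1) := by
    have := intervalIntegral.integral_eq_sub_of_hasDerivAt
      (f := fun x => Real.sin x^(k+1))
      (f' := fun θ => ((k:ℝ)+1) * (Real.sin θ^k * Real.cos θ))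
      (a := 0) (b := T) ?_ ?_
    · rw [this]; simp
    · intro θ _
      have h1 : HasDerivAt (fun x => Real.sin x ^ (k+1))
          (((k:ℝ)+1) * Real.sin θ^k * Real.cos θ) θ := by
        simpa using (Real.hasDerivAt_sin θ).fun_pow (k+1)
      refine h1.congr_deriv ?_
      ring
    · exact (continuous_const.mul c3).intervalIntegrable _ _
  -- linearity splits
  have int1 : IntervalIntegrable (fun θ => Real.sin θ^k * Real.cos θ^2) volume 0 T :=
    c1.intervalIntegrable _ _
  have int2 : IntervalIntegrable (fun θ => Real.sin θ^k * Real.sin θ^2) volume 0 T :=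
    c2.intervalIntegrable _ _
  have int3 : IntervalIntegrable (fun θ => Real.sin θ^k * Real.cos θ) volume 0 T :=
    c3.intervalIntegrable _ _
  have int4 : IntervalIntegrable (fun θ => Real.sin θ^k) volume 0 T :=
    c4.intervalIntegrable _ _
  have hE1 : ((k:ℝ)+1) * (∫ θ in (0:ℝ)..T, Real.sin θ^k * Real.cos θ^2)
      - (∫ θ in (0:ℝ)..T, Real.sin θ^k * Real.sin θ^2) = Real.sin T^(k+1) * Real.cos T := by
    rw [← intervalIntegral.integral_const_mul, ← intervalIntegral.integral_sub
      ((continuous_const.fun_mul c1).intervalIntegrable _ _) int2]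
    exact hFTC1
  have hE3 : ((k:ℝ)+1) * (∫ θ in (0:ℝ)..T, Real.sin θ^k * Real.cos θ)
      = Real.sin T^(k+1) := by
    rw [← intervalIntegral.integral_const_mul]
    exact hFTC2
  have hsplit : (∫ θ in (0:ℝ)..T, Real.sin θ^k * (Real.cos θ + r/2)^2)
      = (∫ θ in (0:ℝ)..T, Real.sin θ^k * Real.cos θ^2)
        + r * (∫ θ in (0:ℝ)..T, Real.sin θ^k * Real.cos θ)
        + (r^2/4) * ∫ θ in (0:ℝ)..T, Real.sin θ^k := by
    rw [← intervalIntegral.integral_const_mul, ← intervalIntegral.integral_const_mul,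
      ← intervalIntegral.integral_add int1 ((continuous_const.fun_mul c3).intervalIntegrable _ _),
      ← intervalIntegral.integral_add (int1.add ((continuous_const.fun_mul c3).intervalIntegrable _ _))
        ((continuous_const.fun_mul c4).intervalIntegrable _ _)]
    apply intervalIntegral.integral_congr
    intro θ _
    simp only
    ring
  have hE4 : 0 ≤ ∫ θ in (0:ℝ)..T, Real.sin θ^k := by
    apply intervalIntegral.integral_nonneg hT0.le
    intro θ hθ
    exact pow_nonneg (Real.sin_nonneg_of_nonneg_of_le_pi hθ.1 (hθ.2.trans hTpi)) k
  have hS : 0 ≤ Real.sin T^(k+1) := pow_nonneg hsT _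
  have hE4' : 0 ≤ ((k:ℝ)+1) * (r^2/4) * ∫ θ in (0:ℝ)..T, Real.sin θ^k := by positivity
  rw [hcosT] at hE1
  have h5 : r * (((k:ℝ)+1) * ∫ θ in (0:ℝ)..T, Real.sin θ^k * Real.cos θ)
      = r * Real.sin T^(k+1) := by rw [hE3]
  have h6 : 0 ≤ r * Real.sin T^(k+1) := mul_nonneg hr0.le hS
  rw [hsplit]
  nlinarith [hE1, h5, h6, hE4']

theorem stmt9 (N : ℕ) (hN : 2 ≤ N) :
    ∃ rbar > (0:ℝ), ∃ C > (0:ℝ), ∀ r ∈ Set.Ioo (0:ℝ) rbar,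
      (N:ℝ) - 1 - C * r ≤ capEig N r ∧ capEig N r ≤ (N:ℝ) - 1 := by
  have hN1 : (1:ℝ) ≤ (N:ℝ) - 1 := by
    have : (2:ℝ) ≤ (N:ℝ) := by exact_mod_cast hN
    linarith
  refine ⟨1/2, by norm_num, 2*((N:ℝ)-1)^2, by nlinarith, ?_⟩
  intro r hr
  have hr0 : 0 < r := hr.1
  have hr1 : r ≤ 1/2 := hr.2.le
  set k : ℕ := N - 2 with hk
  have hcast : ((k:ℝ)+1) = (N:ℝ) - 1 := by
    rw [hk, Nat.cast_sub hN]
    push_cast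
    ring
  set T : ℝ := Real.arccos (-r/2) with hT
  have hT0 : 0 < T := by
    rw [hT]; apply Real.arccos_pos.2; linarith
  have hTpi : T ≤ π := Real.arccos_le_pi _
  -- the witness
  set w₀ : ℝ → ℝ := fun θ => Real.cos θ + r/2 with hw₀
  have hw₀cd : ContDiffOn ℝ 1 w₀ (Set.Icc 0 T) :=
    ((Real.contDiff_cos.of_le le_top).add contDiff_const).contDiffOn
  have hw₀T : w₀ T = 0 := by
    rw [hw₀]
    simp only
    rw [hT, Real.cos_arccos (by linarith) (by linarith)]
    ring
  have hderiv_w₀ : deriv w₀ = fun θ => -Real.sin θ := by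
    funext θ
    rw [hw₀]
    rw [deriv_add_const]
    exact Real.deriv_cos
  have hDen₀ : 0 < ∫ θ in (0:ℝ)..T, Real.sin θ ^ k * (w₀ θ)^2 :=
    capDenPos k hr0 hr1
  set S : Set ℝ := {q : ℝ | ∃ w : ℝ → ℝ,
    ContDiffOn ℝ 1 w (Set.Icc 0 (Real.arccos (-r / 2))) ∧
    w (Real.arccos (-r / 2)) = 0 ∧
    (0 < ∫ θ in (0:ℝ)..Real.arccos (-r / 2), Real.sin θ ^ (N - 2) * (w θ) ^ 2) ∧
    q = (∫ θ in (0:ℝ)..Real.arccos (-r / 2), Real.sin θ ^ (N - 2) * (deriv w θ) ^ 2) /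
        (∫ θ in (0:ℝ)..Real.arccos (-r / 2), Real.sin θ ^ (N - 2) * (w θ) ^ 2)} with hS
  have hEig : capEig N r = sInf S := rfl
  have hmem : ((∫ θ in (0:ℝ)..T, Real.sin θ ^ k * (deriv w₀ θ) ^ 2) /
      (∫ θ in (0:ℝ)..T, Real.sin θ ^ k * (w₀ θ) ^ 2)) ∈ S :=
    ⟨w₀, hw₀cd, hw₀T, hDen₀, rfl⟩
  -- lower bound for all elements of S
  have hlb : ∀ q ∈ S, ((k:ℝ)+1) - 2*((k:ℝ)+1)^2 * r ≤ q := by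
    intro q hq
    obtain ⟨w, hcd, hwT, hden, hqeq⟩ := hq
    set g : ℝ → ℝ := derivWithin w (Set.Icc 0 T) with hg
    have hwc : ContinuousOn w (Set.Icc 0 T) := hcd.continuousOn
    have hgc : ContinuousOn g (Set.Icc 0 T) :=
      hcd.continuousOn_derivWithin (uniqueDiffOn_Icc hT0) le_rfl
    have hdw : ∀ θ ∈ Set.Ioo (0:ℝ) T, HasDerivAt w (g θ) θ := by
      intro θ hθ
      have hnh : Set.Icc (0:ℝ) T ∈ 𝓝 θ := Icc_mem_nhds hθ.1 hθ.2
      have hdiff : DifferentiableWithinAt ℝ w (Set.Icc 0 T) θ :=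
        (hcd.differentiableOn one_ne_zero) θ (Set.Ioo_subset_Icc_self hθ)
      have hdat : DifferentiableAt ℝ w θ := hdiff.differentiableAt hnh
      have hgθ : g θ = deriv w θ := by rw [hg]; exact derivWithin_of_mem_nhds hnh
      rw [hgθ]
      exact hdat.hasDerivAt
    have hcongr : (∫ θ in (0:ℝ)..T, Real.sin θ ^ k * (deriv w θ) ^ 2)
        = ∫ θ in (0:ℝ)..T, Real.sin θ ^ k * (g θ) ^ 2 := by
      apply intervalIntegral.integral_congr_ae
      have h0 : volume ({T} : Set ℝ) = 0 := Real.volume_singleton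
      have h1 : ∀ᵐ (θ : ℝ), θ ∉ ({T} : Set ℝ) :=
        MeasureTheory.measure_eq_zero_iff_ae_notMem.mp h0
      filter_upwards [h1] with θ hθT hmemI
      rw [Set.uIoc_of_le hT0.le] at hmemI
      have hθ : θ ∈ Set.Ioo (0:ℝ) T :=
        ⟨hmemI.1, lt_of_le_of_ne hmemI.2 (fun h => hθT (by simp [h]))⟩
      have : deriv w θ = g θ := by
        rw [hg]
        exact (derivWithin_of_mem_nhds (Icc_mem_nhds hθ.1 hθ.2)).symm
      rw [this]
    have hcl := capLower k hr0 hr1 hwc hgc hdw hwT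
    rw [hqeq, hcongr, le_div_iff₀ hden]
    rw [hcongr] at *
    exact hcl
  -- conclusion
  constructor
  · rw [hEig]
    have h1 := le_csInf ⟨_, hmem⟩ hlb
    have h2 : (N:ℝ) - 1 - 2*((N:ℝ)-1)^2 * r = ((k:ℝ)+1) - 2*((k:ℝ)+1)^2 * r := by
      rw [hcast]
    linarith [h2 ▸ h1]
  · rw [hEig]
    have hbdd : BddBelow S := by
      refine ⟨0, fun q hq => ?_⟩
      obtain ⟨w, hcd, hwT, hden, hqeq⟩ := hq
      rw [hqeq]
      apply div_nonneg _ hden.le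
      apply intervalIntegral.integral_nonneg hT0.le
      intro θ hθ
      exact mul_nonneg (pow_nonneg
        (Real.sin_nonneg_of_nonneg_of_le_pi hθ.1 (hθ.2.trans hTpi)) k) (sq_nonneg _)
    have hle := csInf_le hbdd hmem
    have hq₀ : ((∫ θ in (0:ℝ)..T, Real.sin θ ^ k * (deriv w₀ θ) ^ 2) /
        (∫ θ in (0:ℝ)..T, Real.sin θ ^ k * (w₀ θ) ^ 2)) ≤ (N:ℝ) - 1 := by
      rw [div_le_iff₀ hDen₀, ← hcast]
      have heq : (∫ θ in (0:ℝ)..T, Real.sin θ ^ k * (deriv w₀ θ) ^ 2)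
          = ∫ θ in (0:ℝ)..T, Real.sin θ ^ k * (Real.sin θ) ^ 2 := by
        apply intervalIntegral.integral_congr
        intro θ _
        rw [hderiv_w₀]
        ring
      rw [heq]
      have h2 : (∫ θ in (0:ℝ)..T, Real.sin θ^k * (w₀ θ)^2)
          = ∫ θ in (0:ℝ)..T, Real.sin θ^k * (Real.cos θ + r/2)^2 := rfl
      rw [h2]
      linarith [capUpper k hr0 hr1]
    exact hle.trans hq₀
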